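/- Let d ≥ 1 be an integer, let P be a finite set of points in ℝ^d, and let B be a closed ball with |B ∩ P| = j for some integer j ≥ 1. Then there exists a closed ball B' such that B' ∩ P ⊆ B ∩ P and |B' ∩ P| = j − 1. -/

import Mathlib

open Metric Set MeasureTheory AffineSubspace

/-- Shrinking lemma for balls: for `d ≥ 1`, if a closed ball
`B ⊆ ℝ^d` contains exactly `j ≥ 1` points of a finite point set `P`, then
there is a closed ball `B'` with `B' ∩ P ⊆ B ∩ P` and `|B' ∩ P| = j - 1`. -/
theorem ball_shrinking_one
    (d : ℕ) (hd : 1 ≤ d)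
    (P : Set (EuclideanSpace ℝ (Fin d))) (hP : P.Finite)
    (c : EuclideanSpace ℝ (Fin d)) (r : ℝ) (hr : 0 ≤ r)
    (j : ℕ) (hj : 1 ≤ j)
    (hcard : (P ∩ Metric.closedBall c r).ncard = j) :
    ∃ (c' : EuclideanSpace ℝ (Fin d)) (r' : ℝ), 0 ≤ r' ∧
      P ∩ Metric.closedBall c' r' ⊆ P ∩ Metric.closedBall c r ∧
      (P ∩ Metric.closedBall c' r').ncard = j - 1 := by
  classical
  haveI : Nonempty (Fin d) := ⟨⟨0, hd⟩⟩
  set S : Set (EuclideanSpace ℝ (Fin d)) := P ∩ Metric.closedBall c r with hSdef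
  have hSfin : S.Finite := hP.inter_of_left _
  -- choose ε
  obtain ⟨ε, hε0, hεP⟩ : ∃ ε > 0, ∀ y ∈ P, y ∉ Metric.closedBall c r →
      r + 2*ε < dist c y := by
    by_cases hT : (P \ Metric.closedBall c r).Nonempty
    · obtain ⟨y0, hy0, hmin⟩ := Set.exists_min_image _ (fun y => dist c y)
        hP.diff hT
      have hy0' : r < dist c y0 := by
        have := hy0.2
        simp [Metric.mem_closedBall, dist_comm] at this
        linarith
      refine ⟨(dist c y0 - r)/3, by linarith, fun y hy hy' => ?_⟩
      have := hmin y ⟨hy, hy'⟩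
      linarith
    · refine ⟨1, one_pos, fun y hy hy' => ?_⟩
      have : y ∈ P \ Metric.closedBall c r := ⟨hy, hy'⟩
      rw [Set.not_nonempty_iff_eq_empty.1 hT] at this
      exact absurd this (Set.notMem_empty y)
  -- bad set of measure zero
  set Bad : Set (EuclideanSpace ℝ (Fin d)) :=
    P ∪ ⋃ x ∈ S, ⋃ y ∈ S, {z | x ≠ y ∧ dist z x = dist z y} with hBad
  have hBad0 : volume Bad = 0 := by
    rw [hBad, measure_union_null_iff]
    constructor
    · exact hP.countable.measure_zero _
    · rw [measure_biUnion_null_iff hSfin.countable]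
      intro x hx
      rw [measure_biUnion_null_iff hSfin.countable]
      intro y hy
      rcases eq_or_ne x y with rfl | hxy
      · simp
      · have hsub : {z : EuclideanSpace ℝ (Fin d) | x ≠ y ∧ dist z x = dist z y}
            ⊆ (AffineSubspace.perpBisector x y : Set (EuclideanSpace ℝ (Fin d))) := by
          intro z hz
          exact (AffineSubspace.mem_perpBisector_iff_dist_eq).2 hz.2
        refine measure_mono_null hsub ?_
        exact Measure.addHaar_affineSubspace volume _
          (by simpa using (AffineSubspace.perpBisector_eq_top (p₁ := x) (p₂ := y)).not.2 hxy)
  -- pick a good center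
  obtain ⟨c'', hc''ball, hc''bad⟩ : ∃ z, z ∈ Metric.ball c ε ∧ z ∉ Bad := by
    by_contra h
    push_neg at h
    have hsub : Metric.ball c ε ⊆ Bad := fun z hz => h z hz
    have := measure_mono_null hsub hBad0
    exact absurd this (ne_of_gt (Metric.measure_ball_pos volume c hε0))
  have hc''P : c'' ∉ P := fun h => hc''bad (Or.inl h)
  have hinj : ∀ x ∈ S, ∀ y ∈ S, dist c'' x = dist c'' y → x = y := by
    intro x hx y hy hxy
    by_contra hne
    exact hc''bad (Or.inr (Set.mem_biUnion hx (Set.mem_biUnion hy ⟨hne, hxy⟩)))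
  have hdcc : dist c'' c < ε := by
    simpa [Metric.mem_ball] using hc''ball
  rcases eq_or_lt_of_le hj with hj1 | hj2
  · -- j = 1 : use a degenerate ball avoiding P
    refine ⟨c'', 0, le_refl 0, ?_, ?_⟩
    · intro x hx
      rcases hx with ⟨hxP, hxB⟩
      simp only [Metric.closedBall_zero, Set.mem_singleton_iff] at hxB
      exact absurd (hxB ▸ hxP) hc''P
    · have : P ∩ Metric.closedBall c'' 0 = ∅ := by
        ext x
        simp only [Metric.closedBall_zero, Set.mem_inter_iff, Set.mem_singleton_iff,
          Set.mem_empty_iff_false, iff_false, not_and]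
        intro hxP hx
        exact hc''P (hx ▸ hxP)
      rw [this, Set.ncard_empty, ← hj1]
  · -- j ≥ 2
    have hSne : S.Nonempty := by
      rw [← Set.ncard_pos hSfin, hcard]; omega
    obtain ⟨p, hpS, hpmax⟩ := Set.exists_max_image S (fun x => dist c'' x) hSfin hSne
    have hSp : (S \ {p}).Nonempty := by
      rw [← Set.ncard_pos hSfin.diff, Set.ncard_diff_singleton_of_mem hpS, hcard]
      omega
    obtain ⟨q, hqS, hqmax⟩ := Set.exists_max_image (S \ {p}) (fun x => dist c'' x)
      hSfin.diff hSp
    have key : P ∩ Metric.closedBall c'' (dist c'' q) = S \ {p} := by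
      ext x
      constructor
      · rintro ⟨hxP, hxB⟩
        have hxd : dist c'' x ≤ dist c'' q := by
          simpa [Metric.mem_closedBall, dist_comm] using hxB
        have hqr : dist c q ≤ r := by
          have := hqS.1.2
          simpa [Metric.mem_closedBall, dist_comm] using this
        have hxS : x ∈ S := by
          refine ⟨hxP, ?_⟩
          by_contra hxB'
          have h1 : r + 2*ε < dist c x := hεP x hxP hxB'
          have h2 : dist c x ≤ dist c c'' + dist c'' x := dist_triangle _ _ _
          have h3 : dist c'' q ≤ dist c'' c + dist c q := dist_triangle _ _ _
          have h4 : dist c c'' < ε := by rwa [dist_comm]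
          linarith
        refine ⟨hxS, ?_⟩
        intro hxp
        rw [Set.mem_singleton_iff] at hxp
        subst hxp
        have h1 : dist c'' q ≤ dist c'' x := hpmax q hqS.1
        have h2 : x = q := hinj x hxS q hqS.1 (le_antisymm hxd h1)
        exact hqS.2 (by simp [h2])
      · rintro ⟨hxS, hxp⟩
        refine ⟨hxS.1, ?_⟩
        have := hqmax x ⟨hxS, hxp⟩
        simpa [Metric.mem_closedBall, dist_comm] using this
    refine ⟨c'', dist c'' q, dist_nonneg, ?_, ?_⟩
    · rw [key]; exact Set.diff_subset
    · rw [key, Set.ncard_diff_singleton_of_mem hpS, hcard]
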